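/- Let p(z) = u(z) + i v(z) be an entire function on ℂ. Suppose there exist constants C, s > 0 and a sequence ρ_n → ∞ of positive reals such that v(z) ≤ C ρ_n^s whenever |z| = ρ_n, for all n. Then p is a polynomial of degree at most s. -/

import Mathlib

open Filter
open intervalIntegral Metric Complex Nat

/-- Representation of Taylor coefficients as circle integrals. -/
lemma rep_integral (p : ℂ → ℂ) (hp : Differentiable ℂ p) (n : ℕ) (r : ℝ) (hr : 0 < r) :
    (∫ θ in (0:ℝ)..(2*Real.pi), p (circleMap 0 r θ) * Complex.exp (-(n:ℂ) * θ * Complex.I))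
      = ((2 * Real.pi : ℝ) : ℂ) * (r:ℂ) ^ n * ((n ! : ℂ)⁻¹ * iteratedDeriv n p 0) := by
  lift r to NNReal using hr.le with R
  have hR : (0:NNReal) < R := by exact_mod_cast hr
  have hps : HasFPowerSeriesOnBall p (cauchyPowerSeries p 0 R) 0 R :=
    (hp.differentiableOn : DifferentiableOn ℂ p (closedBall 0 R)).hasFPowerSeriesOnBall hR
  have hcoeff : (cauchyPowerSeries p 0 R n fun _ => 1) = (n ! : ℂ)⁻¹ * iteratedDeriv n p 0 := by
    have h1 := hps.factorial_smul (1:ℂ) n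
    rw [iteratedDeriv_eq_iteratedFDeriv, ← h1, nsmul_eq_mul]
    field_simp
    rw [mul_div_cancel_right₀ _ (show ((n !:ℂ)) ≠ 0 by exact_mod_cast n.factorial_ne_zero)]
  rw [← hcoeff, cauchyPowerSeries_apply]
  have hRne : ((R:ℝ):ℂ) ≠ 0 := by exact_mod_cast hr.ne'
  have hcirc : (∮ z in C(0,(R:ℝ)), ((1:ℂ)/(z-0))^n • (z-0)⁻¹ • p z)
      = Complex.I * (((R:ℝ):ℂ)⁻¹)^n *
        ∫ θ in (0:ℝ)..(2*Real.pi), p (circleMap 0 R θ) * Complex.exp (-(n:ℂ) * θ * Complex.I) := by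
    rw [circleIntegral, ← intervalIntegral.integral_const_mul]
    refine intervalIntegral.integral_congr fun θ _ => ?_
    have he : circleMap 0 (R:ℝ) θ = ((R:ℝ):ℂ) * Complex.exp (θ * Complex.I) := by
      simp [circleMap]
    have hee : Complex.exp (-(n:ℂ) * θ * Complex.I) = (Complex.exp (θ * Complex.I))⁻¹ ^ n := by
      rw [← Complex.exp_neg, ← Complex.exp_nat_mul]
      ring_nf
    have hne : Complex.exp ((θ:ℂ) * Complex.I) ≠ 0 := Complex.exp_ne_zero _
    rw [deriv_circleMap, he, smul_eq_mul, smul_eq_mul, smul_eq_mul, hee, sub_zero]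
    field_simp
    ring
  rw [hcirc, smul_eq_mul]
  have hπ : (Real.pi:ℂ) ≠ 0 := by exact_mod_cast Real.pi_ne_zero
  push_cast
  field_simp
  ring_nf
  rw [← mul_pow, mul_inv_cancel₀ hRne, one_pow, one_mul]
  congr 1
  funext θ
  ring_nf

/-- Positive-frequency Fourier coefficients of an entire function on a circle vanish. -/
lemma vanish_integral (p : ℂ → ℂ) (hp : Differentiable ℂ p) (m : ℕ) (r : ℝ) (hr : 0 < r) :
    (∫ θ in (0:ℝ)..(2*Real.pi),
      p (circleMap 0 r θ) * Complex.exp (((m:ℂ)+1) * θ * Complex.I)) = 0 := by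
  have h0 : (∮ z in C(0, r), p z * z ^ m) = 0 := by
    refine circleIntegral_eq_zero_of_differentiable_on_off_countable hr.le
      Set.countable_empty ((hp.continuous.mul (continuous_pow m)).continuousOn) ?_
    exact fun z _ => (hp z).mul (differentiableAt_pow m)
  have hcirc : (∮ z in C(0, r), p z * z ^ m)
      = Complex.I * ((r:ℂ))^(m+1) *
        ∫ θ in (0:ℝ)..(2*Real.pi), p (circleMap 0 r θ) * Complex.exp (((m:ℂ)+1) * θ * Complex.I) := by
    rw [circleIntegral, ← intervalIntegral.integral_const_mul]
    refine intervalIntegral.integral_congr fun θ _ => ?_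
    have he : circleMap 0 r θ = (r:ℂ) * Complex.exp (θ * Complex.I) := by simp [circleMap]
    have hee : Complex.exp (((m:ℂ)+1) * θ * Complex.I) = (Complex.exp (θ * Complex.I)) ^ (m+1) := by
      rw [← Complex.exp_nat_mul]
      push_cast
      ring_nf
    rw [deriv_circleMap, he, smul_eq_mul, hee]
    ring
  rw [hcirc] at h0
  have hrne : ((r:ℝ):ℂ) ≠ 0 := by exact_mod_cast hr.ne'
  have := mul_eq_zero.mp h0
  rcases this with h | h
  · exact absurd h (by simp [Complex.I_ne_zero, hrne, pow_ne_zero])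
  · exact h

lemma intervalIntegral_conj' (f : ℝ → ℂ) (a b : ℝ) :
    (∫ x in a..b, (starRingEnd ℂ) (f x)) = (starRingEnd ℂ) (∫ x in a..b, f x) := by
  simp only [intervalIntegral, map_sub, ← integral_conj]

lemma exp_neg_int_integral (n : ℕ) (hn : 1 ≤ n) :
    (∫ θ in (0:ℝ)..(2*Real.pi), Complex.exp (-(n:ℂ) * θ * Complex.I)) = 0 := by
  have hn' : ((n:ℂ)) ≠ 0 := by
    exact_mod_cast (Nat.one_le_iff_ne_zero.mp hn)
  have hc : (-(n:ℂ) * Complex.I) ≠ 0 := by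
    simp [Complex.I_ne_zero, hn']
  have h : ∀ θ : ℝ, -(n:ℂ) * θ * Complex.I = (-(n:ℂ) * Complex.I) * θ := fun θ => by ring
  calc (∫ θ in (0:ℝ)..(2*Real.pi), Complex.exp (-(n:ℂ) * θ * Complex.I))
      = ∫ θ in (0:ℝ)..(2*Real.pi), Complex.exp ((-(n:ℂ) * Complex.I) * θ) := by
        refine intervalIntegral.integral_congr fun θ _ => by rw [h θ]
    _ = (Complex.exp ((-(n:ℂ) * Complex.I) * ((2*Real.pi : ℝ):ℂ)) - Complex.exp ((-(n:ℂ) * Complex.I) * ((0:ℝ):ℂ))) / (-(n:ℂ) * Complex.I) :=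
        integral_exp_mul_complex hc
    _ = 0 := by
        have h3 := Complex.exp_int_mul_two_pi_mul_I (-(n:ℤ))
        rw [show (((-(n:ℤ)):ℤ):ℂ) * (2*(Real.pi:ℂ)*Complex.I) = (-(n:ℂ) * Complex.I) * ((2*Real.pi:ℝ):ℂ) from by push_cast; ring] at h3
        rw [h3]
        simp

lemma coeff_bound (p : ℂ → ℂ) (hp : Differentiable ℂ p) (n : ℕ) (hn : 1 ≤ n)
    (r : ℝ) (hr : 0 < r) (M : ℝ) (hM : ∀ z, ‖z‖ = r → (p z).im ≤ M) :
    ‖(n ! : ℂ)⁻¹ * iteratedDeriv n p 0‖ * r ^ n ≤ 2 * (M - (p 0).im) := by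
  obtain ⟨m, rfl⟩ : ∃ m, n = m + 1 := ⟨n - 1, (Nat.succ_pred_eq_of_pos hn).symm⟩
  set n := m + 1
  have cont1 : Continuous fun θ : ℝ => p (circleMap 0 r θ) :=
    hp.continuous.comp (continuous_circleMap 0 r)
  have conte : Continuous fun θ : ℝ => Complex.exp (-(n:ℂ) * θ * Complex.I) :=
    Complex.continuous_exp.comp (by continuity)
  have contc : Continuous fun θ : ℝ => (starRingEnd ℂ) (p (circleMap 0 r θ)) :=
    Complex.continuous_conj.comp cont1
  -- the conjugate integral vanishes
  have hconj : (∫ θ in (0:ℝ)..(2*Real.pi),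
      (starRingEnd ℂ) (p (circleMap 0 r θ)) * Complex.exp (-(n:ℂ) * θ * Complex.I)) = 0 := by
    have h1 : (∫ θ in (0:ℝ)..(2*Real.pi),
        (starRingEnd ℂ) (p (circleMap 0 r θ) * Complex.exp (((m:ℂ)+1) * θ * Complex.I))) = 0 := by
      rw [intervalIntegral_conj', vanish_integral p hp m r hr, map_zero]
    have hexpc : ∀ θ:ℝ, (starRingEnd ℂ) (Complex.exp (((m:ℂ)+1) * θ * Complex.I))
        = Complex.exp (-(n:ℂ) * θ * Complex.I) := by
      intro θ
      rw [← Complex.exp_conj]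
      congr 1
      simp only [map_mul, map_add, map_one, Complex.conj_I, Complex.conj_ofReal, map_natCast]
      push_cast [n]
      ring
    exact (intervalIntegral.integral_congr fun θ _ => by
      show (starRingEnd ℂ) (p (circleMap 0 r θ)) * Complex.exp (-(n:ℂ) * θ * Complex.I)
          = (starRingEnd ℂ) (p (circleMap 0 r θ) * Complex.exp (((m:ℂ)+1) * θ * Complex.I))
      rw [map_mul, hexpc θ]).trans h1
  -- the constant integral vanishes
  have hconst : (∫ θ in (0:ℝ)..(2*Real.pi),
      ((2*M:ℝ):ℂ) * Complex.I * Complex.exp (-(n:ℂ) * θ * Complex.I)) = 0 := by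
    rw [intervalIntegral.integral_const_mul, exp_neg_int_integral n hn, mul_zero]
  -- representation of the coefficient with the modified integrand
  have hrep : ((2 * Real.pi : ℝ) : ℂ) * (r:ℂ) ^ n * ((n ! : ℂ)⁻¹ * iteratedDeriv n p 0)
      = ∫ θ in (0:ℝ)..(2*Real.pi),
        (p (circleMap 0 r θ) - (starRingEnd ℂ) (p (circleMap 0 r θ)) - ((2*M:ℝ):ℂ) * Complex.I)
          * Complex.exp (-(n:ℂ) * θ * Complex.I) := by
    rw [← rep_integral p hp n r hr]
    have hsplit : ∀ θ : ℝ,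
        (p (circleMap 0 r θ) - (starRingEnd ℂ) (p (circleMap 0 r θ)) - ((2*M:ℝ):ℂ) * Complex.I)
          * Complex.exp (-(n:ℂ) * θ * Complex.I)
        = p (circleMap 0 r θ) * Complex.exp (-(n:ℂ) * θ * Complex.I)
          - (starRingEnd ℂ) (p (circleMap 0 r θ)) * Complex.exp (-(n:ℂ) * θ * Complex.I)
          - ((2*M:ℝ):ℂ) * Complex.I * Complex.exp (-(n:ℂ) * θ * Complex.I) := fun θ => by ring
    rw [intervalIntegral.integral_congr (g := _) fun θ _ => hsplit θ]
    rw [intervalIntegral.integral_sub, intervalIntegral.integral_sub, hconj, hconst]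
    · ring
    · exact (cont1.mul conte).intervalIntegrable _ _
    · exact (contc.mul conte).intervalIntegrable _ _
    · exact ((cont1.mul conte).sub (contc.mul conte)).intervalIntegrable _ _
    · exact ((continuous_const.mul conte)).intervalIntegrable _ _
  -- mean value: integral of the imaginary part
  have hmean : (∫ θ in (0:ℝ)..(2*Real.pi), (p (circleMap 0 r θ)).im)
      = 2 * Real.pi * (p 0).im := by
    have h0 := rep_integral p hp 0 r hr
    simp only [Nat.cast_zero, neg_zero, zero_mul, Complex.exp_zero, mul_one, pow_zero,
      Nat.factorial_zero, Nat.cast_one, inv_one, one_mul, iteratedDeriv_zero] at h0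
    have hii0 : IntervalIntegrable (fun θ : ℝ => p (circleMap 0 r θ))
        MeasureTheory.volume 0 (2*Real.pi) := cont1.intervalIntegrable _ _
    have him := Complex.imCLM.intervalIntegral_comp_comm hii0
    simp only [Complex.imCLM_apply] at him
    rw [him, h0]
    simp [Complex.mul_im]
  -- norm bound
  have hnorm : ‖∫ θ in (0:ℝ)..(2*Real.pi),
      (p (circleMap 0 r θ) - (starRingEnd ℂ) (p (circleMap 0 r θ)) - ((2*M:ℝ):ℂ) * Complex.I)
        * Complex.exp (-(n:ℂ) * θ * Complex.I)‖
      ≤ 2 * Real.pi * (2 * (M - (p 0).im)) := by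
    refine le_trans (intervalIntegral.norm_integral_le_integral_norm Real.two_pi_pos.le) ?_
    have hptw : ∀ θ : ℝ,
        ‖(p (circleMap 0 r θ) - (starRingEnd ℂ) (p (circleMap 0 r θ)) - ((2*M:ℝ):ℂ) * Complex.I)
          * Complex.exp (-(n:ℂ) * θ * Complex.I)‖
        = 2 * (M - (p (circleMap 0 r θ)).im) := by
      intro θ
      have habs : ‖circleMap 0 r θ‖ = r := by
        simp [norm_circleMap_zero, abs_of_pos hr]
      have him : (p (circleMap 0 r θ)).im ≤ M := hM _ habs
      have hsub : p (circleMap 0 r θ) - (starRingEnd ℂ) (p (circleMap 0 r θ))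
          = (2 * (p (circleMap 0 r θ)).im : ℝ) * Complex.I := by
        rw [Complex.sub_conj]
        try push_cast
        try ring
      rw [norm_mul, hsub]
      have : ((2 * (p (circleMap 0 r θ)).im : ℝ) : ℂ) * Complex.I - ((2*M:ℝ):ℂ) * Complex.I
          = ((2 * ((p (circleMap 0 r θ)).im - M) : ℝ) : ℂ) * Complex.I := by
        push_cast
        ring
      rw [this, norm_mul, Complex.norm_I, mul_one, Complex.norm_real]
      have hexp : ‖Complex.exp (-(n:ℂ) * θ * Complex.I)‖ = 1 := by
        rw [Complex.norm_exp]
        simp [Complex.mul_re]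
      rw [hexp, mul_one, Real.norm_eq_abs, abs_of_nonpos (by nlinarith)]
      ring
    rw [intervalIntegral.integral_congr fun θ _ => hptw θ]
    have hii : IntervalIntegrable (fun θ : ℝ => (p (circleMap 0 r θ)).im)
        MeasureTheory.volume 0 (2*Real.pi) :=
      (Complex.continuous_im.comp cont1).intervalIntegrable _ _
    have : (∫ θ in (0:ℝ)..(2*Real.pi), 2 * (M - (p (circleMap 0 r θ)).im))
        = 2 * ((2*Real.pi) * M - ∫ θ in (0:ℝ)..(2*Real.pi), (p (circleMap 0 r θ)).im) := by
      rw [intervalIntegral.integral_const_mul, intervalIntegral.integral_sub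
        (intervalIntegrable_const) hii]
      simp only [intervalIntegral.integral_const, smul_eq_mul, sub_zero]
    rw [this, hmean]
    exact le_of_eq (by ring)
  have hfin : 2 * Real.pi * (r ^ n * ‖(n ! : ℂ)⁻¹ * iteratedDeriv n p 0‖)
      ≤ 2 * Real.pi * (2 * (M - (p 0).im)) := by
    calc 2 * Real.pi * (r ^ n * ‖(n ! : ℂ)⁻¹ * iteratedDeriv n p 0‖)
        = ‖((2 * Real.pi : ℝ) : ℂ) * (r:ℂ) ^ n * ((n ! : ℂ)⁻¹ * iteratedDeriv n p 0)‖ := by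
          simp only [norm_mul, norm_pow, Complex.norm_real, Real.norm_eq_abs,
            abs_of_pos Real.two_pi_pos, abs_of_pos hr, _root_.abs_two, abs_of_pos Real.pi_pos]
          ring
      _ ≤ 2 * Real.pi * (2 * (M - (p 0).im)) := by rw [hrep]; exact hnorm
  have h2 := (mul_le_mul_iff_right₀ Real.two_pi_pos).mp hfin
  calc ‖(n ! : ℂ)⁻¹ * iteratedDeriv n p 0‖ * r ^ n
      = r ^ n * ‖(n ! : ℂ)⁻¹ * iteratedDeriv n p 0‖ := mul_comm _ _
    _ ≤ 2 * (M - (p 0).im) := h2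


/-- An entire function whose imaginary part is bounded above by `C ρ_n ^ s` on a
sequence of circles `|z| = ρ_n` with `ρ_n → ∞` is a polynomial of degree at most `s`. -/
theorem entire_imaginary_part_bound_polynomial
    (p : ℂ → ℂ) (hp : Differentiable ℂ p)
    (C s : ℝ) (hC : 0 < C) (hs : 0 < s)
    (ρ : ℕ → ℝ) (hρpos : ∀ n, 0 < ρ n) (hρ : Tendsto ρ atTop atTop)
    (hbound : ∀ n, ∀ z : ℂ, ‖z‖ = ρ n → (p z).im ≤ C * ρ n ^ s) :
    ∃ q : Polynomial ℂ, (q.natDegree : ℝ) ≤ s ∧ ∀ z, p z = q.eval z := by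
  set a : ℕ → ℂ := fun n => (n ! : ℂ)⁻¹ * iteratedDeriv n p 0 with ha
  have hzero : ∀ n : ℕ, s < (n:ℝ) → a n = 0 := by
    intro n hn
    have hn1 : 1 ≤ n := by
      rcases Nat.eq_zero_or_pos n with h | h
      · exfalso; rw [h] at hn; simp at hn; linarith
      · exact h
    have hb : ∀ k, ‖a n‖ ≤ (2 * (C * ρ k ^ s - (p 0).im)) / ρ k ^ n := by
      intro k
      rw [le_div_iff₀ (pow_pos (hρpos k) n)]
      exact coeff_bound p hp n hn1 (ρ k) (hρpos k) (C * ρ k ^ s) (hbound k)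
    have hrw : ∀ k, (2 * (C * ρ k ^ s - (p 0).im)) / ρ k ^ n
        = 2*C * ρ k ^ (s - (n:ℝ)) - 2*(p 0).im * ρ k ^ (-(n:ℝ)) := by
      intro k
      have hk := hρpos k
      have hne : ρ k ^ (n:ℕ) ≠ 0 := (pow_pos hk n).ne'
      rw [Real.rpow_sub hk, Real.rpow_neg hk.le, Real.rpow_natCast]
      field_simp
    have hlim : Tendsto (fun k => (2 * (C * ρ k ^ s - (p 0).im)) / ρ k ^ n) atTop (nhds 0) := by
      have h1 : Tendsto (fun k => ρ k ^ (s - (n:ℝ))) atTop (nhds 0) := by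
        have := (tendsto_rpow_neg_atTop (show (0:ℝ) < (n:ℝ) - s by linarith)).comp hρ
        simpa [Function.comp_def, neg_sub] using this
      have h2 : Tendsto (fun k => ρ k ^ (-(n:ℝ))) atTop (nhds 0) := by
        have := (tendsto_rpow_neg_atTop (show (0:ℝ) < (n:ℝ) by positivity)).comp hρ
        simpa [Function.comp_def] using this
      have := ((h1.const_mul (2*C)).sub (h2.const_mul (2*(p 0).im)))
      simp only [mul_zero, sub_zero] at this
      refine Tendsto.congr (fun k => (hrw k).symm) ?_
      simpa using this
    have : ‖a n‖ ≤ 0 := ge_of_tendsto' hlim hb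
    exact norm_le_zero_iff.mp this
  set d := ⌊s⌋₊ with hd
  refine ⟨∑ k ∈ Finset.range (d+1), Polynomial.C (a k) * Polynomial.X ^ k, ?_, ?_⟩
  · have hdeg : (∑ k ∈ Finset.range (d+1),
        Polynomial.C (a k) * Polynomial.X ^ k).natDegree ≤ d :=
      Polynomial.natDegree_sum_le_of_forall_le _ _ fun k hk =>
        le_trans (Polynomial.natDegree_C_mul_X_pow_le _ _)
          (Nat.lt_succ_iff.mp (Finset.mem_range.mp hk))
    calc ((∑ k ∈ Finset.range (d+1),
          Polynomial.C (a k) * Polynomial.X ^ k).natDegree : ℝ)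
        ≤ (d:ℝ) := by exact_mod_cast hdeg
      _ ≤ s := Nat.floor_le hs.le
  · intro z
    have hts := Complex.taylorSeries_eq_of_entire' (c := 0) (z := z) hp
    simp only [sub_zero] at hts
    have htsum : ∑' n : ℕ, a n * z ^ n = ∑ k ∈ Finset.range (d+1), a k * z ^ k := by
      refine tsum_eq_sum ?_
      intro b hb
      have hsb : s < (b:ℝ) := by
        have h1 : d + 1 ≤ b := Nat.not_lt.mp (fun h => hb (Finset.mem_range.mpr h))
        have := Nat.lt_floor_add_one s
        calc s < (d:ℝ) + 1 := this
          _ ≤ (b:ℝ) := by exact_mod_cast h1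
      rw [hzero b hsb, zero_mul]
    rw [← hts]
    rw [show (∑' n : ℕ, (n ! : ℂ)⁻¹ * iteratedDeriv n p 0 * z ^ n)
        = ∑' n : ℕ, a n * z ^ n from rfl, htsum]
    simp [Polynomial.eval_finset_sum]
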